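/- Let V be a real inner product space of dimension 2, let m₀, m₁ ∈ V be unit vectors, let ξ ∈ [0,1], and let μ₀, μ₁ ∈ V be unit vectors with ⟨μ₀, μ₁⟩ = 0. Then ξ·⟨μ₁, m₀⟩² + (1 − ξ)·⟨μ₀, m₁⟩² ≥ (1/2)·(1 − √(1 − 4ξ(1 − ξ)·⟨m₀, m₁⟩²)). -/

import Mathlib

open RealInnerProductSpace

/-- In a two-dimensional real inner product space, the probability of error of the
decision rule given by an orthonormal pair of observable vectors `μ₀, μ₁` is at least the
Helstrom probability of error determined by the overlap of the state vectors `m₀, m₁`. -/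
theorem prob_error_ge_helstrom_inner {V : Type*}
    [NormedAddCommGroup V] [InnerProductSpace ℝ V]
    (hdim : Module.finrank ℝ V = 2)
    (m₀ m₁ μ₀ μ₁ : V) (hm₀ : ‖m₀‖ = 1) (hm₁ : ‖m₁‖ = 1)
    (hμ₀ : ‖μ₀‖ = 1) (hμ₁ : ‖μ₁‖ = 1) (horth : ⟪μ₀, μ₁⟫ = 0)
    (ξ : ℝ) (hξ : ξ ∈ Set.Icc (0 : ℝ) 1) :
    ξ * ⟪μ₁, m₀⟫ ^ 2 + (1 - ξ) * ⟪μ₀, m₁⟫ ^ 2 ≥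
      (1 / 2) * (1 - Real.sqrt (1 - 4 * ξ * (1 - ξ) * ⟪m₀, m₁⟫ ^ 2)) := by
  obtain ⟨hξ0, hξ1⟩ := hξ
  haveI : FiniteDimensional ℝ V := FiniteDimensional.of_finrank_pos (by omega)
  -- orthonormal family
  set v : Fin 2 → V := ![μ₀, μ₁] with hv
  have horth' : ⟪μ₁, μ₀⟫ = 0 := by rw [real_inner_comm]; exact horth
  have hon : Orthonormal ℝ v := by
    rw [orthonormal_iff_ite]
    intro i j
    fin_cases i <;> fin_cases j <;>
      simp [hv, horth, horth', real_inner_self_eq_norm_sq, hμ₀, hμ₁]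
  have hcard : Fintype.card (Fin 2) = Module.finrank ℝ V := by simp [hdim]
  let B := basisOfOrthonormalOfCardEqFinrank hon hcard
  have hB : ⇑B = v := coe_basisOfOrthonormalOfCardEqFinrank hon hcard
  let OB : OrthonormalBasis (Fin 2) ℝ V := B.toOrthonormalBasis (by rw [hB]; exact hon)
  have hOB : ∀ i, OB i = v i := by
    intro i
    simp [OB, Module.Basis.coe_toOrthonormalBasis, hB]
  have parseval : ∀ x y : V, ⟪x, y⟫ = ⟪μ₀, x⟫ * ⟪μ₀, y⟫ + ⟪μ₁, x⟫ * ⟪μ₁, y⟫ := by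
    intro x y
    have := OB.sum_inner_mul_inner x y
    rw [Fin.sum_univ_two] at this
    rw [← this, hOB 0, hOB 1]
    simp [hv, real_inner_comm]
  set a := ⟪μ₀, m₀⟫
  set b := ⟪μ₁, m₀⟫
  set c := ⟪μ₀, m₁⟫
  set d := ⟪μ₁, m₁⟫
  have h0 : a ^ 2 + b ^ 2 = 1 := by
    have := parseval m₀ m₀
    rw [real_inner_self_eq_norm_sq, hm₀] at this
    nlinarith [this]
  have h1 : c ^ 2 + d ^ 2 = 1 := by
    have := parseval m₁ m₁
    rw [real_inner_self_eq_norm_sq, hm₁] at this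
    nlinarith [this]
  have hτ : ⟪m₀, m₁⟫ = a * c + b * d := parseval m₀ m₁
  rw [hτ]
  set E := ξ * b ^ 2 + (1 - ξ) * c ^ 2 with hE
  by_cases hcase : 1 - 2 * E ≤ 0
  · have : Real.sqrt (1 - 4 * ξ * (1 - ξ) * (a * c + b * d) ^ 2) ≥ 0 := Real.sqrt_nonneg _
    linarith
  · push_neg at hcase
    have identity : 1 - 4 * ξ * (1 - ξ) * (a * c + b * d) ^ 2 - (1 - 2 * E) ^ 2 =
        (2 * ξ * a * b - 2 * (1 - ξ) * c * d) ^ 2 := by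
      rw [hE]
      linear_combination ((-4) * ξ * c ^ 2 + 4 * ξ ^ 2 * c ^ 2 - 4 * ξ ^ 2 * b ^ 2) * h0 +
        ((-4) * ξ * b ^ 2 + 4 * ξ ^ 2 * b ^ 2 - 4 * c ^ 2 + 8 * ξ * c ^ 2 - 4 * ξ ^ 2 * c ^ 2) * h1
    have key : (1 - 2 * E) ^ 2 ≤ 1 - 4 * ξ * (1 - ξ) * (a * c + b * d) ^ 2 := by
      nlinarith [sq_nonneg (2 * ξ * a * b - 2 * (1 - ξ) * c * d), identity]
    have hsq : Real.sqrt (1 - 4 * ξ * (1 - ξ) * (a * c + b * d) ^ 2) ≥ 1 - 2 * E := by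
      have := Real.sqrt_le_sqrt key
      rwa [Real.sqrt_sq (le_of_lt hcase)] at this
    linarith
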